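/- For every h > 0 there exists a constant C = C(h) > 0 such that for all positive integers j, j' one has |(j·tanh(h·j))^{1/2} − (j'·tanh(h·j'))^{1/2}| ≤ C·|j − j'| / min{√j, √j'}. -/

import Mathlib

open Real

lemma my_hasDerivAt_tanh (x : ℝ) :
    HasDerivAt Real.tanh (1 / Real.cosh x ^ 2) x := by
  have h : HasDerivAt (fun t => Real.sinh t / Real.cosh t)
      ((Real.cosh x * Real.cosh x - Real.sinh x * Real.sinh x) / Real.cosh x ^ 2) x :=
    (Real.hasDerivAt_sinh x).div (Real.hasDerivAt_cosh x) (Real.cosh_pos x).ne'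
  have hfun : Real.tanh = fun t => Real.sinh t / Real.cosh t :=
    funext fun t => Real.tanh_eq_sinh_div_cosh t
  have heq : (Real.cosh x * Real.cosh x - Real.sinh x * Real.sinh x) / Real.cosh x ^ 2
      = 1 / Real.cosh x ^ 2 := by
    have := Real.cosh_sq_sub_sinh_sq x
    rw [show Real.cosh x * Real.cosh x - Real.sinh x * Real.sinh x
        = Real.cosh x ^ 2 - Real.sinh x ^ 2 by ring, this]
  rw [hfun]
  exact heq ▸ h

lemma my_tanh_le_tanh {a b : ℝ} (hab : a ≤ b) : Real.tanh a ≤ Real.tanh b := by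
  rw [Real.tanh_eq_sinh_div_cosh, Real.tanh_eq_sinh_div_cosh,
    div_le_div_iff₀ (Real.cosh_pos a) (Real.cosh_pos b)]
  have : Real.sinh (a - b) ≤ 0 := by
    rw [Real.sinh_nonpos_iff]; linarith
  rw [Real.sinh_sub] at this
  linarith

lemma my_tanh_pos {x : ℝ} (hx : 0 < x) : 0 < Real.tanh x := by
  rw [Real.tanh_eq_sinh_div_cosh]
  exact div_pos (Real.sinh_pos_iff.2 hx) (Real.cosh_pos x)

lemma my_tanh_le_one (x : ℝ) : Real.tanh x ≤ 1 := by
  rw [Real.tanh_eq_sinh_div_cosh, div_le_one (Real.cosh_pos x)]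
  exact (Real.sinh_lt_cosh x).le

lemma my_tanh_lip {x y : ℝ} (hx : 0 ≤ x) (hxy : x ≤ y) :
    Real.tanh y - Real.tanh x ≤ (1 / Real.cosh x ^ 2) * (y - x) := by
  have key : ‖Real.tanh y - Real.tanh x‖ ≤ (1 / Real.cosh x ^ 2) * ‖y - x‖ := by
    apply Convex.norm_image_sub_le_of_norm_hasDerivWithin_le
      (f' := fun t => 1 / Real.cosh t ^ 2) (s := Set.Icc x y)
      (fun t _ => (my_hasDerivAt_tanh t).hasDerivWithinAt)
      ?_ (convex_Icc x y) (Set.left_mem_Icc.2 hxy) (Set.right_mem_Icc.2 hxy)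
    intro t ht
    have h1 : Real.cosh x ≤ Real.cosh t := by
      rw [Real.cosh_le_cosh, abs_of_nonneg hx, abs_of_nonneg (hx.trans ht.1)]
      exact ht.1
    have h2 : (0:ℝ) < Real.cosh x ^ 2 := pow_pos (Real.cosh_pos x) 2
    have h3 : Real.cosh x ^ 2 ≤ Real.cosh t ^ 2 :=
      pow_le_pow_left₀ (Real.cosh_pos x).le h1 2
    rw [Real.norm_eq_abs, abs_of_nonneg (by positivity)]
    exact one_div_le_one_div_of_le h2 h3
  calc Real.tanh y - Real.tanh x ≤ ‖Real.tanh y - Real.tanh x‖ := le_norm_self _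
    _ ≤ (1 / Real.cosh x ^ 2) * ‖y - x‖ := key
    _ = (1 / Real.cosh x ^ 2) * (y - x) := by
        rw [Real.norm_eq_abs, abs_of_nonneg (by linarith)]

lemma my_cosh_sq_lower {t : ℝ} (ht : 0 < t) : t / 2 ≤ Real.cosh t ^ 2 := by
  have h1 : Real.exp t / 2 ≤ Real.cosh t := by
    rw [Real.cosh_eq]
    have := Real.exp_pos (-t)
    linarith
  have h2 : Real.exp t ^ 2 / 4 ≤ Real.cosh t ^ 2 := by
    have := pow_le_pow_left₀ (by positivity : (0:ℝ) ≤ Real.exp t / 2) h1 2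
    calc Real.exp t ^ 2 / 4 = (Real.exp t / 2) ^ 2 := by ring
      _ ≤ Real.cosh t ^ 2 := this
  have h3 : 2 * t ≤ Real.exp t ^ 2 := by
    have := Real.add_one_le_exp (2 * t)
    have he : Real.exp (2 * t) = Real.exp t ^ 2 := by
      rw [← Real.exp_nat_mul]; norm_num [mul_comm]
    linarith [he ▸ this]
  linarith

lemma my_aux (h : ℝ) (hh : 0 < h) (x y : ℝ) (hx : 1 ≤ x) (hxy : x ≤ y) :
    Real.sqrt (y * Real.tanh (h * y)) - Real.sqrt (x * Real.tanh (h * x)) ≤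
      3 / Real.sqrt (Real.tanh h) * (y - x) / Real.sqrt x := by
  have hx0 : (0:ℝ) < x := lt_of_lt_of_le one_pos hx
  have hy0 : (0:ℝ) < y := lt_of_lt_of_le hx0 hxy
  have hhx : 0 < h * x := mul_pos hh hx0
  set a := x * Real.tanh (h * x) with ha_def
  set b := y * Real.tanh (h * y) with hb_def
  have hta : 0 < Real.tanh (h * x) := my_tanh_pos hhx
  have ha : 0 < a := mul_pos hx0 hta
  have hab : a ≤ b :=
    mul_le_mul hxy (my_tanh_le_tanh (by nlinarith)) hta.le hy0.le
  have hsa : 0 < Real.sqrt a := Real.sqrt_pos.2 ha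
  -- step 1 : √b - √a ≤ (b - a)/√a
  have step1 : Real.sqrt b - Real.sqrt a ≤ (b - a) / Real.sqrt a := by
    rw [le_div_iff₀ hsa]
    have h1 : Real.sqrt a ≤ Real.sqrt b := Real.sqrt_le_sqrt hab
    have h2 : Real.sqrt b * Real.sqrt a ≤ b := by
      calc Real.sqrt b * Real.sqrt a ≤ Real.sqrt b * Real.sqrt b :=
            mul_le_mul_of_nonneg_left h1 (Real.sqrt_nonneg b)
        _ = b := Real.mul_self_sqrt (ha.le.trans hab)
    have h3 : Real.sqrt a * Real.sqrt a = a := Real.mul_self_sqrt ha.le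
    nlinarith
  -- step 2 : b - a ≤ 3 (y - x)
  have step2 : b - a ≤ 3 * (y - x) := by
    have hty : Real.tanh (h * y) ≤ 1 := my_tanh_le_one _
    have hty0 : 0 < Real.tanh (h * y) := my_tanh_pos (mul_pos hh hy0)
    have hlip : Real.tanh (h * y) - Real.tanh (h * x) ≤
        (1 / Real.cosh (h * x) ^ 2) * (h * y - h * x) :=
      my_tanh_lip hhx.le (by nlinarith)
    have hcb : h * x / 2 ≤ Real.cosh (h * x) ^ 2 := my_cosh_sq_lower hhx
    have hc2 : (0:ℝ) < Real.cosh (h * x) ^ 2 := pow_pos (Real.cosh_pos _) 2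
    have hinv : 1 / Real.cosh (h * x) ^ 2 ≤ 2 / (h * x) := by
      rw [div_le_div_iff₀ hc2 hhx]
      linarith
    have hbound : x * (Real.tanh (h * y) - Real.tanh (h * x)) ≤ 2 * (y - x) := by
      have h1 : Real.tanh (h * y) - Real.tanh (h * x) ≤ 2 / (h * x) * (h * (y - x)) := by
        have := mul_le_mul_of_nonneg_right hinv (by nlinarith : (0:ℝ) ≤ h * y - h * x)
        calc Real.tanh (h * y) - Real.tanh (h * x)
            ≤ (1 / Real.cosh (h * x) ^ 2) * (h * y - h * x) := hlip
          _ ≤ 2 / (h * x) * (h * y - h * x) := this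
          _ = 2 / (h * x) * (h * (y - x)) := by ring
      have h2 : x * (2 / (h * x) * (h * (y - x))) = 2 * (y - x) := by
        field_simp
      nlinarith [mul_le_mul_of_nonneg_left h1 hx0.le]
    have hexpand : b - a = (y - x) * Real.tanh (h * y)
        + x * (Real.tanh (h * y) - Real.tanh (h * x)) := by
      rw [ha_def, hb_def]; ring
    nlinarith [mul_le_mul_of_nonneg_left hty (by linarith : (0:ℝ) ≤ y - x)]
  -- step 3 : √(tanh h) * √x ≤ √a
  have hth : 0 < Real.tanh h := my_tanh_pos hh
  have hsth : 0 < Real.sqrt (Real.tanh h) := Real.sqrt_pos.2 hth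
  have hsx : 0 < Real.sqrt x := Real.sqrt_pos.2 hx0
  have step3 : Real.sqrt (Real.tanh h) * Real.sqrt x ≤ Real.sqrt a := by
    rw [← Real.sqrt_mul hth.le]
    apply Real.sqrt_le_sqrt
    rw [ha_def, mul_comm (Real.tanh h) x]
    exact mul_le_mul_of_nonneg_left (my_tanh_le_tanh (by nlinarith)) hx0.le
  have step4 : (b - a) / Real.sqrt a ≤
      3 * (y - x) / (Real.sqrt (Real.tanh h) * Real.sqrt x) :=
    div_le_div₀ (by linarith) step2 (mul_pos hsth hsx) step3
  have heq : 3 * (y - x) / (Real.sqrt (Real.tanh h) * Real.sqrt x)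
      = 3 / Real.sqrt (Real.tanh h) * (y - x) / Real.sqrt x := by
    field_simp
  linarith [heq ▸ step4]

/-- For every depth h > 0 there is C = C(h) > 0 such that
|√(j tanh(h j)) − √(j' tanh(h j'))| ≤ C |j − j'| / min{√j, √j'} for all j, j' ≥ 1. -/
theorem freq_difference_upper_bound (h : ℝ) (hh : 0 < h) :
    ∃ C : ℝ, 0 < C ∧ ∀ j j' : ℕ, 1 ≤ j → 1 ≤ j' →
      |Real.sqrt ((j : ℝ) * Real.tanh (h * (j : ℝ))) -
          Real.sqrt ((j' : ℝ) * Real.tanh (h * (j' : ℝ)))| ≤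
        C * |(j : ℝ) - (j' : ℝ)| / min (Real.sqrt j) (Real.sqrt j') := by
  refine ⟨3 / Real.sqrt (Real.tanh h),
    div_pos (by norm_num) (Real.sqrt_pos.2 (my_tanh_pos hh)), ?_⟩
  have main : ∀ j j' : ℕ, 1 ≤ j → 1 ≤ j' → j ≤ j' →
      |Real.sqrt ((j : ℝ) * Real.tanh (h * (j : ℝ))) -
          Real.sqrt ((j' : ℝ) * Real.tanh (h * (j' : ℝ)))| ≤
        3 / Real.sqrt (Real.tanh h) * |(j : ℝ) - (j' : ℝ)| /
          min (Real.sqrt j) (Real.sqrt j') := by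
    intro j j' hj hj' hjj
    have hx : (1:ℝ) ≤ (j:ℝ) := by exact_mod_cast hj
    have hxy : (j:ℝ) ≤ (j':ℝ) := by exact_mod_cast hjj
    have hmono : Real.sqrt ((j : ℝ) * Real.tanh (h * (j : ℝ))) ≤
        Real.sqrt ((j' : ℝ) * Real.tanh (h * (j' : ℝ))) := by
      apply Real.sqrt_le_sqrt
      have hx0 : (0:ℝ) < (j:ℝ) := lt_of_lt_of_le one_pos hx
      exact mul_le_mul hxy (my_tanh_le_tanh (by nlinarith))
        (my_tanh_pos (mul_pos hh hx0)).le (by linarith)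
    have hminj : min (Real.sqrt j) (Real.sqrt j') = Real.sqrt j :=
      min_eq_left (Real.sqrt_le_sqrt hxy)
    have habs : |(j : ℝ) - (j' : ℝ)| = (j':ℝ) - (j:ℝ) := by
      rw [abs_sub_comm, abs_of_nonneg (by linarith)]
    rw [hminj, habs, abs_of_nonpos (by linarith), neg_sub]
    exact my_aux h hh _ _ hx hxy
  intro j j' hj hj'
  rcases le_total j j' with hle | hle
  · exact main j j' hj hj' hle
  · have := main j' j hj' hj hle
    rwa [abs_sub_comm, abs_sub_comm ((j':ℝ)) ((j:ℝ)), min_comm] at this
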